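/- arXiv:2301.08471 — 10 statements merged into one kernel-verified Lean document; each statement's English description precedes it below -/
import Mathlib

section
/- Let X be a complex Hilbert space and A, T bounded linear operators on X. Suppose there exists δ > 0 such that Re⟨A x, T x⟩ ≥ (-1 + δ)·‖A x‖·‖T x‖ for all x with A x ≠ 0 and T x ≠ 0. Then there exists c > 0 such that ‖A x + t·T x‖ ≥ c·‖A x‖ for all x ∈ X and all t ≥ 0. -/
open scoped InnerProductSpace

theorem stmt_0 {X : Type*} [NormedAddCommGroup X] [InnerProductSpace ℂ X] [CompleteSpace X]
    (A T : X →L[ℂ] X) (δ : ℝ) (hδ : 0 < δ)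
    (h : ∀ x : X, A x ≠ 0 → T x ≠ 0 →
      (-1 + δ) * (‖A x‖ * ‖T x‖) ≤ (⟪A x, T x⟫_ℂ).re) :
    ∃ c > (0 : ℝ), ∀ x : X, ∀ t : ℝ, 0 ≤ t →
      c * ‖A x‖ ≤ ‖A x + (t : ℂ) • T x‖ := by
  set δ' : ℝ := min δ 1 with hδ'
  have hδ'0 : 0 < δ' := lt_min hδ one_pos
  have hδ'1 : δ' ≤ 1 := min_le_right _ _
  have hδ'δ : δ' ≤ δ := min_le_left _ _
  refine ⟨Real.sqrt δ', Real.sqrt_pos.mpr hδ'0, fun x t ht => ?_⟩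
  have hc1 : Real.sqrt δ' ≤ 1 := by
    rw [show (1:ℝ) = Real.sqrt 1 by simp]
    exact Real.sqrt_le_sqrt hδ'1
  by_cases hA : A x = 0
  · simp [hA]
  by_cases hT : T x = 0
  · simp only [hT, smul_zero, add_zero]
    calc Real.sqrt δ' * ‖A x‖ ≤ 1 * ‖A x‖ := by
          exact mul_le_mul_of_nonneg_right hc1 (norm_nonneg _)
      _ = ‖A x‖ := one_mul _
  -- main case
  have hre := h x hA hT
  have key : (Real.sqrt δ' * ‖A x‖) ^ 2 ≤ ‖A x + (t : ℂ) • T x‖ ^ 2 := by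
    have hexp : ‖A x + (t : ℂ) • T x‖ ^ 2
        = ‖A x‖ ^ 2 + 2 * (t * (⟪A x, T x⟫_ℂ).re) + (t * ‖T x‖) ^ 2 := by
      rw [norm_add_sq (𝕜 := ℂ)]
      have h1 : (⟪A x, (t : ℂ) • T x⟫_ℂ) = (t : ℂ) * ⟪A x, T x⟫_ℂ := inner_smul_right _ _ _
      have h2 : ‖(t : ℂ) • T x‖ = t * ‖T x‖ := by
        rw [norm_smul]
        simp [abs_of_nonneg ht]
      rw [h1, h2]
      ring_nf
      simp [Complex.mul_re]
    rw [hexp, mul_pow, Real.sq_sqrt hδ'0.le]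
    have hab : 0 ≤ ‖A x‖ * ‖T x‖ := by positivity
    have hre' : (-1 + δ') * (‖A x‖ * ‖T x‖) ≤ (⟪A x, T x⟫_ℂ).re := by
      nlinarith
    nlinarith [sq_nonneg (‖A x‖ - t * ‖T x‖), sq_nonneg (t * ‖T x‖), norm_nonneg (A x),
      norm_nonneg (T x), mul_nonneg ht (norm_nonneg (T x)),
      mul_nonneg (mul_nonneg ht (norm_nonneg (T x))) (norm_nonneg (A x))]
  have h0 : 0 ≤ Real.sqrt δ' * ‖A x‖ := by positivity
  nlinarith [norm_nonneg (A x + (t : ℂ) • T x)]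
end

section
/- Let X be a complex Hilbert space and A, T bounded linear operators on X with T(ker A) = ker A. Suppose there exists δ > 0 such that Re⟨A x, T x⟩ ≥ (-1 + δ)·‖A x‖·‖T x‖ for all x with A x ≠ 0 and T x ≠ 0. Then R(A) ∩ ker(A) = {0}. -/
open scoped InnerProductSpace

theorem stmt_4 {X : Type*} [NormedAddCommGroup X] [InnerProductSpace ℂ X] [CompleteSpace X]
    (A T : X →L[ℂ] X)
    (hker : T '' (LinearMap.ker (A : X →ₗ[ℂ] X) : Set X) = (LinearMap.ker (A : X →ₗ[ℂ] X) : Set X))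
    (δ : ℝ) (hδ : 0 < δ)
    (h : ∀ x : X, A x ≠ 0 → T x ≠ 0 →
      (-1 + δ) * (‖A x‖ * ‖T x‖) ≤ (⟪A x, T x⟫_ℂ).re) :
    LinearMap.range (A : X →ₗ[ℂ] X) ⊓ LinearMap.ker (A : X →ₗ[ℂ] X) = ⊥ := by
  rw [eq_bot_iff]
  intro y hy
  rw [Submodule.mem_inf] at hy
  obtain ⟨⟨x, hx⟩, hyk⟩ := hy
  simp only [Submodule.mem_bot]
  by_contra hy0
  -- get k ∈ ker A with T k = -y
  have hmem : (-y : X) ∈ (LinearMap.ker (A : X →ₗ[ℂ] X) : Set X) := by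
    simp only [SetLike.mem_coe, LinearMap.mem_ker, map_neg]
    rw [LinearMap.mem_ker] at hyk
    simp [hyk]
  rw [← hker] at hmem
  obtain ⟨k, hk, hTk⟩ := hmem
  rw [SetLike.mem_coe, LinearMap.mem_ker] at hk
  set n := ‖y‖ with hn
  have hnpos : 0 < n := norm_pos_iff.mpr hy0
  set c := ‖T x‖ with hc
  set d := (⟪y, T x⟫_ℂ).re with hd
  set e := |δ - 1| with he
  set s : ℝ := max (c / n + 1) ((d + e * n * c + 1) / (δ * n ^ 2)) with hs
  have hs1 : c / n + 1 ≤ s := le_max_left _ _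
  have hsn : c + n ≤ s * n := by
    have := (div_le_iff₀ hnpos).mp (by linarith : c / n ≤ s - 1)
    nlinarith
  have hspos : 0 ≤ s := by nlinarith [norm_nonneg (T x)]
  have hs2 : d + e * n * c + 1 ≤ δ * s * n ^ 2 := by
    have h2 := le_max_right (c / n + 1) ((d + e * n * c + 1) / (δ * n ^ 2))
    rw [← hs, div_le_iff₀ (by positivity)] at h2
    nlinarith
  -- the test vector
  set z := x + (s : ℂ) • k with hz
  have hAz : A z = y := by
    simp only [ContinuousLinearMap.coe_coe] at hk hx
    simp [hz, map_add, map_smul, hk, hx]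
  have hTz : T z = T x - (s : ℂ) • y := by
    simp [hz, map_add, map_smul, hTk, sub_eq_add_neg, smul_neg]
  have hnormTz_lb : s * n - c ≤ ‖T z‖ := by
    have := norm_sub_norm_le ((s : ℂ) • y) (T x)
    have hsy : ‖(s : ℂ) • y‖ = s * n := by
      rw [norm_smul, Complex.norm_real, Real.norm_eq_abs, abs_of_nonneg hspos, hn]
    calc s * n - c = ‖(s : ℂ) • y‖ - ‖T x‖ := by rw [hsy, hc]
      _ ≤ ‖(s : ℂ) • y - T x‖ := norm_sub_norm_le _ _
      _ = ‖T z‖ := by rw [hTz, norm_sub_rev]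
  have hnormTz_ub : ‖T z‖ ≤ s * n + c := by
    have hsy : ‖(s : ℂ) • y‖ = s * n := by
      rw [norm_smul, Complex.norm_real, Real.norm_eq_abs, abs_of_nonneg hspos, hn]
    calc ‖T z‖ = ‖T x - (s : ℂ) • y‖ := by rw [hTz]
      _ ≤ ‖T x‖ + ‖(s : ℂ) • y‖ := norm_sub_le _ _
      _ = s * n + c := by rw [hsy, hc]; ring
  have hTz0 : T z ≠ 0 := by
    intro h0
    rw [h0, norm_zero] at hnormTz_lb
    nlinarith
  have hAz0 : A z ≠ 0 := by rw [hAz]; exact hy0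
  have hkey := h z hAz0 hTz0
  rw [hAz] at hkey
  -- compute the inner product
  have hinner : (⟪y, T z⟫_ℂ).re = d - s * n ^ 2 := by
    rw [hTz, inner_sub_right, inner_smul_right, inner_self_eq_norm_sq_to_K]
    rw [Complex.sub_re, hd, hn]
    norm_num [Complex.mul_re]
    left
    norm_cast
  rw [hinner, ← hn] at hkey
  -- hkey : (-1 + δ) * (n * ‖T z‖) ≤ d - s * n ^ 2
  have he1 : δ - 1 ≤ e := le_abs_self _
  have he2 : 1 - δ ≤ e := by rw [he, abs_sub_comm]; exact le_abs_self _
  have hcnn : (0:ℝ) ≤ c := norm_nonneg _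
  rcases le_or_gt 1 δ with hδ1 | hδ1
  · have h1 : ((-1 + δ) * n) * (s * n - c) ≤ ((-1 + δ) * n) * ‖T z‖ :=
      mul_le_mul_of_nonneg_left hnormTz_lb (mul_nonneg (by linarith) hnpos.le)
    have h2 : (δ - 1) * (n * c) ≤ e * (n * c) :=
      mul_le_mul_of_nonneg_right he1 (mul_nonneg hnpos.le hcnn)
    nlinarith
  · have h1 : ((-1 + δ) * n) * (s * n + c) ≤ ((-1 + δ) * n) * ‖T z‖ :=
      mul_le_mul_of_nonpos_left hnormTz_ub (mul_nonpos_of_nonpos_of_nonneg (by linarith) hnpos.le)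
    have h2 : (1 - δ) * (n * c) ≤ e * (n * c) :=
      mul_le_mul_of_nonneg_right he2 (mul_nonneg hnpos.le hcnn)
    nlinarith
end

section
/- Let X be a complex Hilbert space and A, T bounded linear operators on X with T(ker A) = ker A. Suppose there exists c > 0 such that ‖A x + t·T x‖ ≥ c·‖A x‖ for all x ∈ X and all t ≥ 0. Then ‖A x + T y‖ ≥ c·‖A x‖ for all x ∈ X and all y ∈ ker A; consequently R(A) + ker(A) is a closed subspace and R(A) ∩ ker(A) = {0}, provided R(A) is closed. -/
open Filter Topology

theorem stmt_5 {X : Type*} [NormedAddCommGroup X] [InnerProductSpace ℂ X] [CompleteSpace X]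
    (A T : X →L[ℂ] X)
    (hker : T '' (LinearMap.ker (A : X →ₗ[ℂ] X) : Set X) = (LinearMap.ker (A : X →ₗ[ℂ] X) : Set X))
    (c : ℝ) (hc : 0 < c)
    (hest : ∀ x : X, ∀ t : ℝ, 0 ≤ t → c * ‖A x‖ ≤ ‖A x + (t : ℂ) • T x‖)
    (hcl : IsClosed (LinearMap.range (A : X →ₗ[ℂ] X) : Set X)) :
    (∀ x : X, ∀ y ∈ LinearMap.ker (A : X →ₗ[ℂ] X), c * ‖A x‖ ≤ ‖A x + T y‖) ∧
      IsClosed ((LinearMap.range (A : X →ₗ[ℂ] X) ⊔ LinearMap.ker (A : X →ₗ[ℂ] X) : Submodule ℂ X) : Set X) ∧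
      LinearMap.range (A : X →ₗ[ℂ] X) ⊓ LinearMap.ker (A : X →ₗ[ℂ] X) = ⊥ := by
  have key : ∀ x : X, ∀ y ∈ LinearMap.ker (A : X →ₗ[ℂ] X), c * ‖A x‖ ≤ ‖A x + T y‖ := by
    intro x y hy
    have hAy : A y = 0 := hy
    have hev : ∀ᶠ t : ℝ in 𝓝[>] (0:ℝ), c * ‖A x‖ ≤ ‖A x + (t:ℂ) • T x + T y‖ := by
      filter_upwards [self_mem_nhdsWithin] with t ht
      have ht' : (0:ℝ) < t := ht
      have htne : (t:ℂ) ≠ 0 := by exact_mod_cast ne_of_gt ht'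
      have h := hest (x + ((t:ℂ))⁻¹ • y) t ht'.le
      have hA : A (x + ((t:ℂ))⁻¹ • y) = A x := by
        simp [map_add, map_smul, hAy]
      have hT : A x + (t:ℂ) • T (x + ((t:ℂ))⁻¹ • y) = A x + (t:ℂ) • T x + T y := by
        simp [map_add, map_smul, smul_smul, mul_inv_cancel₀ htne, add_assoc]
      rw [hA, hT] at h
      exact h
    have hcont : ContinuousAt (fun t : ℝ => ‖A x + (t:ℂ) • T x + T y‖) 0 := by
      fun_prop
    have hten : Tendsto (fun t : ℝ => ‖A x + (t:ℂ) • T x + T y‖) (𝓝[>] 0)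
        (𝓝 ‖A x + T y‖) := by
      have h0 : ‖A x + ((0:ℝ):ℂ) • T x + T y‖ = ‖A x + T y‖ := by simp
      have := tendsto_nhdsWithin_of_tendsto_nhds (s := Set.Ioi (0:ℝ)) hcont.tendsto
      rwa [h0] at this
    exact ge_of_tendsto hten hev
  have key2 : ∀ a ∈ LinearMap.range (A : X →ₗ[ℂ] X), ∀ z ∈ LinearMap.ker (A : X →ₗ[ℂ] X), c * ‖a‖ ≤ ‖a + z‖ := by
    rintro a ⟨x, rfl⟩ z hz
    have hz' : z ∈ T '' (LinearMap.ker (A : X →ₗ[ℂ] X) : Set X) := by rw [hker]; exact hz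
    obtain ⟨y, hy, rfl⟩ := hz'
    exact key x y hy
  refine ⟨key, ?_, ?_⟩
  · apply IsSeqClosed.isClosed
    intro u w hu huw
    choose a ha z hz hsum using fun n => Submodule.mem_sup.mp (hu n)
    have hca : CauchySeq a := by
      have hcu : CauchySeq u := huw.cauchySeq
      rw [Metric.cauchySeq_iff] at hcu ⊢
      intro ε hε
      obtain ⟨N, hN⟩ := hcu (c * ε) (by positivity)
      refine ⟨N, fun m hm n hn => ?_⟩
      have h1 := key2 (a m - a n) (sub_mem (ha m) (ha n)) (z m - z n)
        (sub_mem (hz m) (hz n))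
      have h2 : a m - a n + (z m - z n) = u m - u n := by
        rw [← hsum m, ← hsum n]; abel
      rw [h2] at h1
      have h3 := hN m hm n hn
      rw [dist_eq_norm] at h3 ⊢
      nlinarith [norm_nonneg (a m - a n)]
    obtain ⟨L, hL⟩ := cauchySeq_tendsto_of_complete hca
    have hLmem : L ∈ LinearMap.range (A : X →ₗ[ℂ] X) :=
      hcl.mem_of_tendsto hL (Filter.Eventually.of_forall ha)
    have hz' : Filter.Tendsto (fun n => u n - a n) atTop (𝓝 (w - L)) := huw.sub hL
    have hkerclosed : IsClosed ((LinearMap.ker (A : X →ₗ[ℂ] X) : Submodule ℂ X) : Set X) :=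
      ContinuousLinearMap.isClosed_ker A
    have hzm : w - L ∈ LinearMap.ker (A : X →ₗ[ℂ] X) := by
      refine hkerclosed.mem_of_tendsto hz' (Filter.Eventually.of_forall fun n => ?_)
      have h4 : u n - a n = z n := by rw [← hsum n]; abel
      rw [h4]; exact hz n
    exact Submodule.mem_sup.mpr ⟨L, hLmem, w - L, hzm, by abel⟩
  · rw [eq_bot_iff]
    rintro a ⟨har, hak⟩
    have h := key2 a har (-a) (neg_mem hak)
    simp only [add_neg_cancel, norm_zero] at h
    have : ‖a‖ = 0 := by nlinarith [norm_nonneg a]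
    simpa using norm_eq_zero.mp this
end

section
/- Let X be a Banach space and A a bounded linear operator on X such that R(A) ∩ ker(A) = {0}. Then R(A) + ker(A) is closed if and only if R(A²) is closed. -/
open ContinuousLinearMap

/-- If `f` is an open surjection and the preimage of `S` is closed, then `S` is closed. -/
lemma isClosed_of_isOpenMap_preimage {E F : Type*} [TopologicalSpace E] [TopologicalSpace F]
    {f : E → F} (hopen : IsOpenMap f) (hsurj : Function.Surjective f) {S : Set F}
    (h : IsClosed (f ⁻¹' S)) : IsClosed S := by
  have hc : Sᶜ = f '' (f ⁻¹' S)ᶜ := by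
    ext y
    constructor
    · intro hy
      obtain ⟨x, rfl⟩ := hsurj y
      exact ⟨x, hy, rfl⟩
    · rintro ⟨x, hx, rfl⟩
      exact hx
  rw [← isOpen_compl_iff, hc]
  exact hopen _ h.isOpen_compl

theorem stmt_6 {X : Type*} [NormedAddCommGroup X] [NormedSpace ℂ X] [CompleteSpace X]
    (A : X →L[ℂ] X)
    (hdisj : LinearMap.range (A : X →ₗ[ℂ] X) ⊓ LinearMap.ker (A : X →ₗ[ℂ] X) = ⊥) :
    IsClosed ((LinearMap.range (A : X →ₗ[ℂ] X) ⊔ LinearMap.ker (A : X →ₗ[ℂ] X) : Submodule ℂ X) : Set X) ↔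
      IsClosed ((LinearMap.range ((A.comp A : X →L[ℂ] X) : X →ₗ[ℂ] X) : Submodule ℂ X) : Set X) := by
  set R := LinearMap.range (A : X →ₗ[ℂ] X) with hR
  set N := LinearMap.ker (A : X →ₗ[ℂ] X) with hN
  set M : Submodule ℂ X := R ⊔ N with hM
  -- the key set identity: M = A ⁻¹' (range A²)
  have hMeq : (M : Set X) = A ⁻¹' ((LinearMap.range ((A.comp A : X →L[ℂ] X) : X →ₗ[ℂ] X) : Submodule ℂ X) : Set X) := by
    ext x
    constructor
    · intro hx
      obtain ⟨y, hy, z, hz, rfl⟩ := Submodule.mem_sup.mp hx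
      obtain ⟨u, rfl⟩ := hy
      have hz0 : A z = 0 := hz
      simp only [Set.mem_preimage, SetLike.mem_coe, LinearMap.mem_range]
      exact ⟨u, by simp [hz0]⟩
    · intro hx
      simp only [Set.mem_preimage, SetLike.mem_coe, LinearMap.mem_range] at hx
      obtain ⟨y, hy⟩ := hx
      have h1 : A (x - A y) = 0 := by
        simp only [map_sub, hy]
        simp [ContinuousLinearMap.comp_apply] at hy ⊢
        rw [hy]; abel
      have : x = A y + (x - A y) := by abel
      rw [this]
      exact Submodule.add_mem_sup (LinearMap.mem_range_self _ y) h1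
  constructor
  · -- hard direction
    intro hMclosed
    haveI : CompleteSpace M := hMclosed.completeSpace_coe
    haveI : CompleteSpace N := (isClosed_ker A).completeSpace_coe
    -- the map Ψ : X × N → M, (x, n) ↦ A x + n
    have hΨmem : ∀ p : X × N, A p.1 + (p.2 : X) ∈ M := fun p =>
      Submodule.add_mem_sup (LinearMap.mem_range_self _ p.1) p.2.2
    let Ψ : X × N →L[ℂ] M :=
      (A.comp (ContinuousLinearMap.fst ℂ X N) +
        N.subtypeL.comp (ContinuousLinearMap.snd ℂ X N)).codRestrict M hΨmem
    have hΨapp : ∀ p : X × N, (Ψ p : X) = A p.1 + (p.2 : X) := fun p => rfl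
    have hΨsurj : Function.Surjective Ψ := by
      rintro ⟨m, hm⟩
      obtain ⟨y, hy, z, hz, hyz⟩ := Submodule.mem_sup.mp hm
      obtain ⟨u, rfl⟩ := hy
      exact ⟨(u, ⟨z, hz⟩), Subtype.ext (by simpa [hΨapp] using hyz)⟩
    have hΨopen : IsOpenMap Ψ := Ψ.isOpenMap hΨsurj
    -- first: R is closed
    have hdisj' : ∀ x : X, x ∈ R → x ∈ N → x = 0 := by
      intro x hx1 hx2
      have : x ∈ R ⊓ N := ⟨hx1, hx2⟩
      rwa [hdisj, Submodule.mem_bot] at this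
    have hSR : IsClosed ((Subtype.val : M → X) ⁻¹' (R : Set X)) := by
      apply isClosed_of_isOpenMap_preimage hΨopen hΨsurj
      have : Ψ ⁻¹' ((Subtype.val : M → X) ⁻¹' (R : Set X)) = {p : X × N | p.2 = 0} := by
        ext p
        simp only [Set.mem_preimage, SetLike.mem_coe, Set.mem_setOf_eq, hΨapp]
        constructor
        · intro hp
          have hp2 : (p.2 : X) ∈ R := by
            have : (p.2 : X) = (A p.1 + (p.2 : X)) - A p.1 := by abel
            rw [this]
            exact Submodule.sub_mem _ hp (LinearMap.mem_range_self _ _)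
          exact Subtype.ext (hdisj' _ hp2 p.2.2)
        · intro hp
          rw [hp]
          simp only [ZeroMemClass.coe_zero, add_zero]
          exact LinearMap.mem_range_self _ p.1
      rw [this]
      exact isClosed_eq continuous_snd continuous_const
    have hRclosed : IsClosed (R : Set X) := by
      have himg : (R : Set X) = Subtype.val '' ((Subtype.val : M → X) ⁻¹' (R : Set X)) := by
        ext x
        constructor
        · intro hx
          exact ⟨⟨x, le_sup_left (α := Submodule ℂ X) (a := R) (b := N) hx⟩, hx, rfl⟩
        · rintro ⟨⟨y, hyM⟩, hy, rfl⟩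
          exact hy
      rw [himg]
      exact (hMclosed.isClosedEmbedding_subtypeVal.isClosedMap) _ hSR
    -- now A : X → R is an open surjection
    haveI : CompleteSpace R := hRclosed.completeSpace_coe
    let A₁ : X →L[ℂ] R := A.codRestrict R (fun x => LinearMap.mem_range_self _ x)
    have hA₁surj : Function.Surjective A₁ := by
      rintro ⟨y, hy⟩
      obtain ⟨x, rfl⟩ := hy
      exact ⟨x, rfl⟩
    have hA₁open : IsOpenMap A₁ := A₁.isOpenMap hA₁surj
    -- range A² is closed in R
    have hS₂ : IsClosed ((Subtype.val : R → X) ⁻¹' ((LinearMap.range ((A.comp A : X →L[ℂ] X) : X →ₗ[ℂ] X) : Submodule ℂ X) : Set X)) := by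
      apply isClosed_of_isOpenMap_preimage hA₁open hA₁surj
      have : A₁ ⁻¹' ((Subtype.val : R → X) ⁻¹' ((LinearMap.range ((A.comp A : X →L[ℂ] X) : X →ₗ[ℂ] X) : Submodule ℂ X) : Set X))
          = (M : Set X) := by
        rw [hMeq]; rfl
      rw [this]
      exact hMclosed
    have himg2 : ((LinearMap.range ((A.comp A : X →L[ℂ] X) : X →ₗ[ℂ] X) : Submodule ℂ X) : Set X)
        = Subtype.val '' ((Subtype.val : R → X) ⁻¹' ((LinearMap.range ((A.comp A : X →L[ℂ] X) : X →ₗ[ℂ] X) : Submodule ℂ X) : Set X)) := by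
      ext x
      constructor
      · intro hx
        have hxR : x ∈ R := by
          obtain ⟨y, rfl⟩ := hx
          exact LinearMap.mem_range_self _ _
        exact ⟨⟨x, hxR⟩, hx, rfl⟩
      · rintro ⟨⟨y, hyR⟩, hy, rfl⟩
        exact hy
    rw [himg2]
    exact (hRclosed.isClosedEmbedding_subtypeVal.isClosedMap) _ hS₂
  · -- easy direction
    intro h2
    rw [hMeq]
    exact h2.preimage A.continuous
end

section
/- Let X be a complex Hilbert space and P a bounded projection on X (P² = P). Then inf { Re⟨P x, x⟩ / (‖P x‖·‖x‖) : P x ≠ 0, x ≠ 0 } > -1; equivalently, the angle of P with respect to the identity is strictly less than π. -/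
open scoped InnerProductSpace

theorem stmt_7 {X : Type*} [NormedAddCommGroup X] [InnerProductSpace ℂ X] [CompleteSpace X]
    (P : X →L[ℂ] X) (hP : P.comp P = P) :
    ∃ δ > (0 : ℝ), ∀ x : X, P x ≠ 0 → x ≠ 0 →
      (-1 + δ) * (‖P x‖ * ‖x‖) ≤ (⟪P x, x⟫_ℂ).re := by
  by_cases hP0 : P = 0
  · exact ⟨1, one_pos, fun x hx _ => absurd (by simp [hP0]) hx⟩
  have hPP : ∀ v, P (P v) = P v := fun v => by
    have := ContinuousLinearMap.ext_iff.mp hP v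
    simpa using this
  have hC1 : (1:ℝ) ≤ ‖P‖ := by
    have h := ContinuousLinearMap.opNorm_comp_le P P
    rw [hP] at h
    have hCpos : 0 < ‖P‖ := norm_pos_iff.mpr hP0
    nlinarith
  set C := ‖P‖ with hC_def
  have hCpos : (0:ℝ) < C := lt_of_lt_of_le one_pos hC1
  have h1C : 0 ≤ 1 - 1/C^2 := by
    have h : 1/C^2 ≤ 1 := by
      rw [div_le_one (by positivity)]; nlinarith
    linarith
  set c := Real.sqrt (1 - 1/C^2) with hc_def
  have hc0 : 0 ≤ c := Real.sqrt_nonneg _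
  have hc2 : c^2 = 1 - 1/C^2 := Real.sq_sqrt h1C
  have hcc : c^2 * C^2 = C^2 - 1 := by
    rw [hc2]; field_simp
  have hc1 : c < 1 := by
    nlinarith [(by positivity : (0:ℝ) < 1/C^2)]
  refine ⟨1 - c, by linarith, fun x hx hx0 => ?_⟩
  set y := P x with hy_def
  set z := x - y with hz_def
  have hyz : x = y + z := by rw [hz_def]; abel
  have hPz : P z = 0 := by
    rw [hz_def, map_sub, hy_def, hPP, sub_self]
  have hPy : P y = y := hPP x
  have hypos : 0 < ‖y‖ := norm_pos_iff.mpr hx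
  set r := (⟪y, z⟫_ℂ).re with hr_def
  have hr : -(c * (‖y‖ * ‖z‖)) ≤ r := by
    by_cases hz0 : z = 0
    · simp [hr_def, hz0]
    · have hzpos : 0 < ‖z‖ := norm_pos_iff.mpr hz0
      set s : ℝ := ‖z‖^2 with hs_def
      have hspos : 0 < s := by positivity
      set w : X := (s:ℂ) • y - (r:ℂ) • z with hw_def
      have hPw : P w = (s:ℂ) • y := by
        rw [hw_def, map_sub, map_smul, map_smul, hPz, hPy, smul_zero, sub_zero]
      have hnorm : s * ‖y‖ ≤ C * ‖w‖ := by
        have h1 : ‖P w‖ ≤ C * ‖w‖ := P.le_opNorm w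
        rw [hPw, norm_smul] at h1
        simpa [Complex.norm_real, abs_of_pos hspos] using h1
      have hsq : ‖w‖^2 = s^2*‖y‖^2 - s*r^2 := by
        rw [hw_def, norm_sub_sq (𝕜 := ℂ), inner_smul_left, inner_smul_right,
          norm_smul, norm_smul]
        have hmul : ((s:ℂ) * ((r:ℂ) * ⟪y,z⟫_ℂ)).re = s * (r * r) := by
          rw [show (s:ℂ)*((r:ℂ)*⟪y,z⟫_ℂ) = ((s*r : ℝ):ℂ)*⟪y,z⟫_ℂ by push_cast; ring,
            Complex.re_ofReal_mul, ← hr_def]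
          ring
        simp only [Complex.conj_ofReal, RCLike.re_to_complex, hmul, Complex.norm_real,
          Real.norm_eq_abs, sq_abs]
        rw [abs_of_pos hspos, mul_pow, mul_pow, sq_abs, ← hs_def]
        ring
      have hnorm2 : (s*‖y‖)^2 ≤ C^2 * ‖w‖^2 := by
        nlinarith [norm_nonneg w, mul_nonneg hspos.le hypos.le]
      rw [hsq] at hnorm2
      have hkey : C^2 * r^2 ≤ (C^2 - 1) * (s * ‖y‖^2) := by
        have h' : s * (C^2*r^2) ≤ s * ((C^2-1)*(s*‖y‖^2)) := by nlinarith [hnorm2]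
        exact le_of_mul_le_mul_left h' hspos
      have hkey2 : r^2 ≤ (c * (‖y‖ * ‖z‖))^2 := by
        have heq : (c*(‖y‖*‖z‖))^2 = c^2 * (s*‖y‖^2) := by
          rw [mul_pow, mul_pow, ← hs_def]; ring
        have heq2 : (C^2-1)*(s*‖y‖^2) = C^2*(c^2*(s*‖y‖^2)) := by
          rw [← hcc]; ring
        have h' : C^2 * r^2 ≤ C^2 * (c^2*(s*‖y‖^2)) := by
          rw [← heq2]; exact hkey
        rw [heq]
        exact le_of_mul_le_mul_left h' (by positivity)
      exact (abs_le_of_sq_le_sq' hkey2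
        (by positivity : (0:ℝ) ≤ c * (‖y‖ * ‖z‖))).1
  have hre : (⟪P x, x⟫_ℂ).re = ‖y‖^2 + r := by
    conv_lhs => rw [← hy_def, hyz]
    rw [inner_add_right]
    have h := inner_self_eq_norm_sq (𝕜 := ℂ) y
    simp only [RCLike.re_to_complex] at h
    rw [Complex.add_re, h, ← hr_def]
  have hzx : ‖z‖ - ‖y‖ ≤ ‖x‖ := by
    have := norm_sub_le x y
    rw [← hz_def] at this
    linarith
  rw [hre]
  nlinarith [mul_nonneg (mul_nonneg hc0 hypos.le)
      (by linarith : (0:ℝ) ≤ ‖x‖ + ‖y‖ - ‖z‖),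
    mul_nonneg (mul_nonneg (by linarith : (0:ℝ) ≤ 1 - c) hypos.le) hypos.le,
    norm_nonneg x]
end

section
/- Let X be a Banach space and A a bounded linear operator on X with closed range such that X = R(A) ⊕ ker(A) (i.e. R(A) + ker(A) = X and R(A) ∩ ker(A) = {0}). Then there exist an invertible bounded operator S on X and a bounded projection P on X such that A = S∘P, S(ker A) = ker A, and S∘P = P∘S. -/
theorem stmt_8 {X : Type*} [NormedAddCommGroup X] [NormedSpace ℂ X] [CompleteSpace X]
    (A : X →L[ℂ] X) (hcl : IsClosed (LinearMap.range (A : X →ₗ[ℂ] X) : Set X))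
    (hsum : LinearMap.range (A : X →ₗ[ℂ] X) ⊔ LinearMap.ker (A : X →ₗ[ℂ] X) = ⊤)
    (hdisj : LinearMap.range (A : X →ₗ[ℂ] X) ⊓ LinearMap.ker (A : X →ₗ[ℂ] X) = ⊥) :
    ∃ S P : X →L[ℂ] X, IsUnit S ∧ P.comp P = P ∧ A = S.comp P ∧
      S '' (LinearMap.ker (A : X →ₗ[ℂ] X) : Set X) = (LinearMap.ker (A : X →ₗ[ℂ] X) : Set X) ∧
      S.comp P = P.comp S := by
  set p := LinearMap.range (A : X →ₗ[ℂ] X) with hp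
  set q := LinearMap.ker (A : X →ₗ[ℂ] X) with hq
  have hcompl : IsCompl p q := ⟨disjoint_iff.mpr hdisj, codisjoint_iff.mpr hsum⟩
  have hqcl : IsClosed (q : Set X) := ContinuousLinearMap.isClosed_ker A
  set projL := p.linearProjOfClosedCompl q hcompl hcl hqcl with hprojL
  set P : X →L[ℂ] X := p.subtypeL.comp projL with hP
  have hPmem : ∀ x, P x ∈ p := fun x => (projL x).2
  have hPleft : ∀ x ∈ p, P x = x := by
    intro x hx
    have := Submodule.linearProjOfIsCompl_apply_left hcompl ⟨x, hx⟩
    exact congrArg Subtype.val this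
  have hPright : ∀ x ∈ q, P x = 0 := by
    intro x hx
    have := Submodule.linearProjOfIsCompl_apply_right' hcompl hx
    exact congrArg Subtype.val this
  have hker : ∀ x, x - P x ∈ q := by
    intro x
    obtain ⟨r, k, hr, hk, hrk⟩ := Submodule.codisjoint_iff_exists_add_eq.mp hcompl.codisjoint x
    have hPx : P x = r := by
      have h1 : P x = P r + P k := by rw [← map_add, hrk]
      rw [hPleft r hr, hPright k hk, add_zero] at h1
      exact h1
    have : x - P x = k := by rw [hPx, ← hrk]; abel
    rw [this]; exact hk
  have hPP : P.comp P = P := by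
    ext x
    exact hPleft (P x) (hPmem x)
  have hAq : ∀ x ∈ q, A x = 0 := fun x hx => hx
  have hAP : ∀ x, A (P x) = A x := by
    intro x
    have h0 := hAq (x - P x) (hker x)
    rw [map_sub, sub_eq_zero] at h0
    exact h0.symm
  -- define S
  set S : X →L[ℂ] X := A + 1 - P with hS
  have hSapp : ∀ x, S x = A x + x - P x := fun x => rfl
  -- S x = x for x ∈ q
  have hSq : ∀ x ∈ q, S x = x := by
    intro x hx
    rw [hSapp, hAq x hx, hPright x hx]
    abel
  -- S (P x) = A x
  have hSP : ∀ x, S (P x) = A x := by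
    intro x
    rw [hSapp, hAP, hPleft (P x) (hPmem x)]
    abel
  -- S injective
  have hinj : LinearMap.ker (S : X →ₗ[ℂ] X) = ⊥ := by
    rw [LinearMap.ker_eq_bot']
    intro x hx
    have hx' : A x + (x - P x) = 0 := by change S x = 0 at hx; rw [hSapp] at hx; rw [← hx]; abel
    have hmem : A x = -(x - P x) := eq_neg_of_add_eq_zero_left hx'
    have hApq : A x ∈ p ⊓ q := by
      constructor
      · exact ⟨x, rfl⟩
      · rw [hmem]; exact q.neg_mem (hker x)
    rw [hdisj] at hApq
    have hA0 : A x = (0 : X) := hApq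
    have hxq : x ∈ q := hA0
    have hxP : P x = 0 := hPright x hxq
    have : x - P x = -A x := by rw [hmem]; abel
    rw [hA0, hxP] at this
    simpa using this
  -- S surjective
  have hsurj : LinearMap.range (S : X →ₗ[ℂ] X) = ⊤ := by
    rw [LinearMap.range_eq_top]
    intro z
    obtain ⟨r, k, hr, hk, hrk⟩ := Submodule.codisjoint_iff_exists_add_eq.mp hcompl.codisjoint z
    obtain ⟨w, hw⟩ := hr
    refine ⟨P w + k, ?_⟩
    have h1 : S (P w + k) = S (P w) + S k := map_add S _ _
    change S (P w + k) = z; change A w = r at hw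
    rw [h1, hSP, hSq k hk, hw, hrk]
  set e := ContinuousLinearEquiv.ofBijective S hinj hsurj with he
  have hecoe : (e : X →L[ℂ] X) = S := ContinuousLinearEquiv.coe_ofBijective S hinj hsurj
  refine ⟨S, P, ?_, hPP, ?_, ?_, ?_⟩
  · refine isUnit_iff_exists.mpr ⟨(e.symm : X →L[ℂ] X), ?_, ?_⟩
    · ext x
      have : S (e.symm x) = x := by
        rw [← hecoe]; exact e.apply_symm_apply x
      simpa [ContinuousLinearMap.mul_apply] using this
    · ext x
      have : e.symm (S x) = x := by
        rw [← hecoe]; exact e.symm_apply_apply x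
      simpa [ContinuousLinearMap.mul_apply] using this
  · ext x
    exact (hSP x).symm
  · ext z
    constructor
    · rintro ⟨x, hx, rfl⟩
      rw [hSq x hx]; exact hx
    · intro hz
      exact ⟨z, hz, hSq z hz⟩
  · ext x
    simp only [ContinuousLinearMap.comp_apply]
    rw [hSP, hSapp x, map_sub, map_add, hPleft (A x) ⟨x, rfl⟩, hPleft (P x) (hPmem x)]
    abel
end

section
/- Let X be a Banach space and Q a quasinilpotent bounded linear operator on X (spectral radius of Q equals 0) with Q ≠ 0 arbitrary. Then X = R(Q) ⊕ ker(Q) fails unless Q = 0; that is, if R(Q) + ker(Q) = X and R(Q) ∩ ker(Q) = {0} then Q = 0. -/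
open Filter Topology
open scoped ENNReal NNReal

theorem stmt_10 {X : Type*} [NormedAddCommGroup X] [NormedSpace ℂ X] [CompleteSpace X]
    (Q : X →L[ℂ] X) (hq : spectralRadius ℂ Q = 0)
    (hsum : LinearMap.range (Q : X →ₗ[ℂ] X) ⊔ LinearMap.ker (Q : X →ₗ[ℂ] X) = ⊤)
    (hdisj : LinearMap.range (Q : X →ₗ[ℂ] X) ⊓ LinearMap.ker (Q : X →ₗ[ℂ] X) = ⊥) :
    Q = 0 := by
  classical
  set K := LinearMap.ker (Q : X →ₗ[ℂ] X) with hK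
  have hKclosed : IsClosed (K : Set X) := ContinuousLinearMap.isClosed_ker Q
  haveI : CompleteSpace K := hKclosed.completeSpace_coe
  -- the map (y, k) ↦ Q y + k is surjective
  set Φ : (X × K) →L[ℂ] X :=
    Q.comp (ContinuousLinearMap.fst ℂ X K) + K.subtypeL.comp (ContinuousLinearMap.snd ℂ X K)
    with hΦ
  have hΦsurj : Function.Surjective Φ := by
    intro x
    have hx : x ∈ LinearMap.range (Q : X →ₗ[ℂ] X) ⊔ LinearMap.ker (Q : X →ₗ[ℂ] X) := by rw [hsum]; trivial
    obtain ⟨a, ha, b, hb, hab⟩ := Submodule.mem_sup.mp hx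
    obtain ⟨y, hy⟩ := ha
    exact ⟨(y, ⟨b, hb⟩), by rw [← hab, ← hy]; simp [hΦ]⟩
  obtain ⟨C, hC0, hC⟩ := ContinuousLinearMap.exists_preimage_norm_le Φ hΦsurj
  -- iterate: every x can be written Q^n y + k with ‖y‖ ≤ C^n ‖x‖
  have key : ∀ n : ℕ, ∀ x : X, ∃ y k : X, Q k = 0 ∧ x = (Q ^ n) y + k ∧ ‖y‖ ≤ C ^ n * ‖x‖ := by
    intro n
    induction n with
    | zero => intro x; exact ⟨x, 0, by simp, by simp, by simp⟩
    | succ n ih =>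
      intro x
      obtain ⟨y, k, hk, hxy, hy⟩ := ih x
      obtain ⟨⟨y', k'⟩, hΦy, hy'norm⟩ := hC y
      have hy'Q : Q y' + (k' : X) = y := by simpa [hΦ] using hΦy
      refine ⟨y', (Q ^ n) (k' : X) + k, ?_, ?_, ?_⟩
      · have hk' : Q (k' : X) = 0 := k'.2
        have : Q ((Q ^ n) (k' : X)) = (Q ^ n) (Q (k' : X)) := by
          simp only [← ContinuousLinearMap.comp_apply, ← ContinuousLinearMap.mul_def]
          rw [← pow_succ, ← pow_succ']
        rw [map_add, this, hk', map_zero, hk, add_zero]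
      · rw [hxy, ← hy'Q]
        simp [pow_succ, map_add, add_assoc]
      · have h1 : ‖y'‖ ≤ ‖((y', k') : X × K)‖ := le_max_left _ _
        calc ‖y'‖ ≤ C * ‖y‖ := h1.trans hy'norm
          _ ≤ C * (C ^ n * ‖x‖) := by
              exact mul_le_mul_of_nonneg_left hy hC0.le
          _ = C ^ (n + 1) * ‖x‖ := by ring
  -- conclude: ‖Q x‖ ≤ ‖Q‖ * ‖Q^n‖ * C^n * ‖x‖ for all n
  have hbound : ∀ n : ℕ, ∀ x : X, ‖Q x‖ ≤ ‖Q‖ * (‖(Q : X →L[ℂ] X) ^ n‖ * C ^ n) * ‖x‖ := by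
    intro n x
    obtain ⟨y, k, hk, hxy, hy⟩ := key n x
    have : Q x = Q ((Q ^ n) y) := by rw [hxy, map_add, hk, add_zero]
    calc ‖Q x‖ = ‖Q ((Q ^ n) y)‖ := by rw [this]
      _ ≤ ‖Q‖ * ‖(Q ^ n) y‖ := Q.le_opNorm _
      _ ≤ ‖Q‖ * (‖(Q : X →L[ℂ] X) ^ n‖ * ‖y‖) :=
          mul_le_mul_of_nonneg_left (((Q : X →L[ℂ] X) ^ n).le_opNorm y) (norm_nonneg Q)
      _ ≤ ‖Q‖ * (‖(Q : X →L[ℂ] X) ^ n‖ * (C ^ n * ‖x‖)) := by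
          refine mul_le_mul_of_nonneg_left (mul_le_mul_of_nonneg_left hy (norm_nonneg _))
            (norm_nonneg Q)
      _ = ‖Q‖ * (‖(Q : X →L[ℂ] X) ^ n‖ * C ^ n) * ‖x‖ := by ring
  -- Gelfand: ‖Q^n‖^(1/n) → 0, so eventually ‖Q^n‖ * C^n ≤ (1/2)^n
  have hgel := spectrum.pow_nnnorm_pow_one_div_tendsto_nhds_spectralRadius Q
  rw [hq] at hgel
  have hsmall : ∀ᶠ n : ℕ in atTop, ‖(Q : X →L[ℂ] X) ^ n‖ * C ^ n ≤ (1/2) ^ n := by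
    have hr : (0 : ℝ≥0∞) < ENNReal.ofReal (1 / (2 * C)) := by
      apply ENNReal.ofReal_pos.mpr; positivity
    have hev := hgel.eventually_lt_const hr
    filter_upwards [hev, eventually_gt_atTop 0] with n hn hn0
    have h2C : (0:ℝ) < 1 / (2 * C) := by positivity
    have h1 : ((‖(Q : X →L[ℂ] X) ^ n‖₊ : ℝ≥0∞) ^ (1 / (n : ℝ))) ^ (n : ℝ) <
        (ENNReal.ofReal (1 / (2 * C))) ^ (n : ℝ) :=
      ENNReal.rpow_lt_rpow hn (by exact_mod_cast hn0)
    rw [← ENNReal.rpow_mul, one_div, inv_mul_cancel₀ (by exact_mod_cast hn0.ne' : (n:ℝ) ≠ 0),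
      ENNReal.rpow_one, ENNReal.ofReal_rpow_of_pos h2C] at h1
    have hreal : ‖(Q : X →L[ℂ] X) ^ n‖ < (1 / (2 * C)) ^ (n : ℝ) := by
      rw [ENNReal.lt_ofReal_iff_toReal_lt (by simp)] at h1
      simpa using h1
    rw [Real.rpow_natCast] at hreal
    have : ‖(Q : X →L[ℂ] X) ^ n‖ * C ^ n < (1 / (2 * C)) ^ n * C ^ n :=
      mul_lt_mul_of_pos_right hreal (by positivity)
    refine this.le.trans (le_of_eq ?_)
    rw [← mul_pow]
    congr 1
    field_simp
  -- conclude Q x = 0 for every x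
  ext x
  simp only [ContinuousLinearMap.zero_apply]
  have hQx : ∀ ε > 0, ‖Q x‖ ≤ ε := by
    intro ε hε
    have htend : Tendsto (fun n : ℕ => ‖Q‖ * (1/2 : ℝ) ^ n * ‖x‖) atTop (𝓝 0) := by
      have := tendsto_pow_atTop_nhds_zero_of_lt_one (by norm_num : (0:ℝ) ≤ 1/2)
        (by norm_num : (1/2 : ℝ) < 1)
      have h2 := (this.const_mul ‖Q‖).mul_const ‖x‖
      simpa using h2
    have hev : ∀ᶠ n : ℕ in atTop, ‖Q‖ * (1/2 : ℝ) ^ n * ‖x‖ < ε :=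
      htend.eventually_lt_const hε
    obtain ⟨n, hn1, hn2⟩ := (hsmall.and hev).exists
    have := hbound n x
    calc ‖Q x‖ ≤ ‖Q‖ * (‖(Q : X →L[ℂ] X) ^ n‖ * C ^ n) * ‖x‖ := this
      _ ≤ ‖Q‖ * (1/2) ^ n * ‖x‖ := by
          have := mul_le_mul_of_nonneg_left hn1 (norm_nonneg Q)
          have := mul_le_mul_of_nonneg_right this (norm_nonneg x)
          linarith [this]
      _ ≤ ε := hn2.le
  have hle : ‖Q x‖ ≤ 0 := le_of_forall_pos_le_add (fun ε hε => by
    rw [zero_add]; exact hQx ε hε)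
  exact norm_le_zero_iff.mp hle
end

section
/- Let X be a Banach space and T a bounded linear operator on X such that the sequence Tⁿ x converges for every x ∈ X as n → ∞. Then X = R(I - T) ⊕ ker(I - T): every x ∈ X decomposes uniquely as x = y + z with T y = y and z in the closure of the range of I - T, and the limit of Tⁿ x equals y. -/
open Filter Topology

theorem stmt_13 {X : Type*} [NormedAddCommGroup X] [NormedSpace ℂ X] [CompleteSpace X]
    (T : X →L[ℂ] X)
    (hconv : ∀ x : X, ∃ L : X, Tendsto (fun n : ℕ => (T ^ n) x) atTop (𝓝 L)) :
    ∀ x : X, ∃! p : X × X, T p.1 = p.1 ∧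
      p.2 ∈ closure (LinearMap.range ((1 - T : X →L[ℂ] X) : X →ₗ[ℂ] X) : Set X) ∧
      x = p.1 + p.2 ∧
      Tendsto (fun n : ℕ => (T ^ n) x) atTop (𝓝 p.1) := by
  intro x
  obtain ⟨L, hL⟩ := hconv x
  refine ⟨(L, x - L), ⟨?_, ?_, by simp, hL⟩, ?_⟩
  · -- T L = L
    have h1 : Tendsto (fun n : ℕ => (T ^ (n + 1)) x) atTop (𝓝 L) :=
      hL.comp (tendsto_add_atTop_nat 1)
    have h2 : Tendsto (fun n : ℕ => T ((T ^ n) x)) atTop (𝓝 (T L)) :=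
      (T.continuous.tendsto L).comp hL
    have heq : (fun n : ℕ => (T ^ (n + 1)) x) = fun n : ℕ => T ((T ^ n) x) := by
      funext n
      simp [pow_succ']
    rw [heq] at h1
    exact tendsto_nhds_unique h2 h1
  · -- x - L ∈ closure (range (1 - T))
    have hmem : ∀ n : ℕ, x - (T ^ n) x ∈ (LinearMap.range ((1 - T : X →L[ℂ] X) : X →ₗ[ℂ] X) : Set X) := by
      intro n
      induction n with
      | zero => simp
      | succ n ih =>
        have : x - (T ^ (n + 1)) x
            = (x - (T ^ n) x) + (1 - T) ((T ^ n) x) := by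
          simp [ContinuousLinearMap.sub_apply, pow_succ', ContinuousLinearMap.mul_apply]
        rw [this]
        exact Submodule.add_mem _ ih ⟨(T ^ n) x, rfl⟩
    have htend : Tendsto (fun n : ℕ => x - (T ^ n) x) atTop (𝓝 (x - L)) :=
      tendsto_const_nhds.sub hL
    exact mem_closure_of_tendsto htend (Filter.Eventually.of_forall hmem)
  · rintro ⟨y, z⟩ ⟨hy, hz, hxyz, hty⟩
    have hyL : y = L := tendsto_nhds_unique hty hL
    have hzL : z = x - L := by rw [hxyz, hyL]; abel
    simp [hyL, hzL]
end

section
/- Let X be a complex Hilbert space and A a bounded operator on X with closed range such that X = R(A) ⊕ ker(A). Then there exists a bounded operator T on X with T(ker A) = ker A and A + t·T invertible for some t > 0, and δ > 0 such that Re⟨A x, T x⟩ ≥ (-1 + δ)·‖A x‖·‖T x‖ whenever A x ≠ 0 and T x ≠ 0. -/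
open scoped InnerProductSpace

theorem stmt_17 {X : Type*} [NormedAddCommGroup X] [InnerProductSpace ℂ X] [CompleteSpace X]
    (A : X →L[ℂ] X) (hcl : IsClosed (LinearMap.range (A : X →ₗ[ℂ] X) : Set X))
    (hsum : LinearMap.range (A : X →ₗ[ℂ] X) ⊔ LinearMap.ker (A : X →ₗ[ℂ] X) = ⊤)
    (hdisj : LinearMap.range (A : X →ₗ[ℂ] X) ⊓ LinearMap.ker (A : X →ₗ[ℂ] X) = ⊥) :
    ∃ T : X →L[ℂ] X, ∃ t > (0 : ℝ), ∃ δ > (0 : ℝ),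
      T '' (LinearMap.ker (A : X →ₗ[ℂ] X) : Set X) = (LinearMap.ker (A : X →ₗ[ℂ] X) : Set X) ∧
      IsUnit (A + (t : ℂ) • T) ∧
      ∀ x : X, A x ≠ 0 → T x ≠ 0 →
        (-1 + δ) * (‖A x‖ * ‖T x‖) ≤ (⟪A x, T x⟫_ℂ).re := by
  classical
  set K := LinearMap.ker (A : X →ₗ[ℂ] X) with hK
  set R := LinearMap.range (A : X →ₗ[ℂ] X) with hR
  have hker : IsClosed (K : Set X) := ContinuousLinearMap.isClosed_ker A
  have hcompl : IsCompl K R := by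
    constructor
    · rw [disjoint_iff, inf_comm]; exact hdisj
    · rw [codisjoint_iff, sup_comm]; exact hsum
  set P : X →L[ℂ] X := K.subtypeL ∘L K.linearProjOfClosedCompl R hcompl hker hcl with hPdef
  have hPapp : ∀ x : X, P x = (K.linearProjOfIsCompl R hcompl x : X) := by
    intro x
    simp [hPdef, Submodule.coe_continuous_linearProjOfClosedCompl']
    rfl
  have hPmem : ∀ x : X, P x ∈ K := by
    intro x; rw [hPapp]; exact (K.linearProjOfIsCompl R hcompl x).2
  have hPleft : ∀ x ∈ K, P x = x := by
    intro x hx; rw [hPapp]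
    exact congrArg Subtype.val (Submodule.linearProjOfIsCompl_apply_left hcompl ⟨x, hx⟩)
  have hPright : ∀ x ∈ R, P x = 0 := by
    intro x hx; rw [hPapp]
    exact congrArg Subtype.val (Submodule.linearProjOfIsCompl_apply_right' hcompl hx)
  have hPzero : ∀ x : X, P x = 0 → x ∈ R := by
    intro x hx
    rw [hPapp] at hx
    have : K.linearProjOfIsCompl R hcompl x = 0 := Subtype.ext hx
    exact (Submodule.linearProjOfIsCompl_apply_eq_zero_iff hcompl).1 this
  set Q : X →L[ℂ] X := ContinuousLinearMap.id ℂ X - P with hQdef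
  set C : ℝ := ‖Q‖ + 1 with hC
  have hC1 : (1 : ℝ) ≤ C := by have := norm_nonneg Q; rw [hC]; linarith
  have hCpos : (0 : ℝ) < C := lt_of_lt_of_le one_pos hC1
  refine ⟨P, 1, one_pos, 1 / (2 * C ^ 2), by positivity, ?_, ?_, ?_⟩
  · -- image of ker
    ext y
    constructor
    · rintro ⟨x, hx, rfl⟩
      rw [hPleft x hx]; exact hx
    · intro hy
      exact ⟨y, hy, hPleft y hy⟩
  · -- invertibility of A + P
    rw [show ((1:ℝ):ℂ) • P = P by norm_num]
    have hinj : LinearMap.ker ((A + P : X →L[ℂ] X) : X →ₗ[ℂ] X) = ⊥ := by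
      rw [LinearMap.ker_eq_bot']
      intro x hx
      have hx' : A x + P x = 0 := hx
      have hAx : A x ∈ R := ⟨x, rfl⟩
      have hPx : P x ∈ K := hPmem x
      have hAx0 : A x = 0 := by
        have hmem : A x ∈ R ⊓ K := by
          refine ⟨hAx, ?_⟩
          have h2 : A x = -(P x) := eq_neg_of_add_eq_zero_left hx'
          rw [h2]; exact neg_mem hPx
        rw [hdisj] at hmem
        exact hmem
      have hPx0 : P x = 0 := by
        rw [hAx0, zero_add] at hx'; exact hx'
      have hxR : x ∈ R := hPzero x hPx0
      have hxK : x ∈ K := hAx0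
      have hmem : x ∈ R ⊓ K := ⟨hxR, hxK⟩
      rw [hdisj] at hmem
      exact hmem
    have hsurj : LinearMap.range ((A + P : X →L[ℂ] X) : X →ₗ[ℂ] X) = ⊤ := by
      rw [LinearMap.range_eq_top]
      intro y
      have hyP : y - P y ∈ R := by
        apply hPzero
        have h3 := hPleft (P y) (hPmem y)
        simp [map_sub, h3]
      obtain ⟨w, hw⟩ := hyP
      refine ⟨w - P w + P y, ?_⟩
      have hAPw : A (P w) = 0 := hPmem w
      have hAPy : A (P y) = 0 := hPmem y
      have hPPw : P (P w) = P w := hPleft _ (hPmem w)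
      have hPPy : P (P y) = P y := hPleft _ (hPmem y)
      have hexp : (A + P) (w - P w + P y)
          = A w - A (P w) + A (P y) + (P w - P (P w) + P (P y)) := by
        simp only [ContinuousLinearMap.add_apply, map_sub, map_add]
        abel
      change (A + P) (w - P w + P y) = y
      rw [hexp, hAPw, hAPy, hPPw, hPPy, (show A w = y - P y from hw)]
      abel
    exact ⟨(ContinuousLinearEquiv.ofBijective (A + P) hinj hsurj).toUnit,
      ContinuousLinearEquiv.coe_ofBijective (A + P) hinj hsurj⟩
  · -- the angle inequality
    intro x hAx hPx
    set u : X := A x with hu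
    set v : X := P x with hv
    have hu0 : (0:ℝ) < ‖u‖ := norm_pos_iff.2 hAx
    have hv0 : (0:ℝ) < ‖v‖ := norm_pos_iff.2 hPx
    set c : ℝ := ‖u‖ / ‖v‖ with hc
    have hc0 : 0 < c := div_pos hu0 hv0
    have hcb : c * ‖v‖ = ‖u‖ := by rw [hc]; field_simp
    set v' : X := (c : ℂ) • v with hv'
    have hnv' : ‖v'‖ = ‖u‖ := by
      rw [hv', norm_smul, Complex.norm_real, Real.norm_eq_abs, abs_of_pos hc0]
      exact hcb
    have hQu : Q u = u := by
      have h4 : P u = 0 := hPright u ⟨x, rfl⟩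
      simp [hQdef, ContinuousLinearMap.sub_apply, h4]
    have hQv' : Q v' = 0 := by
      have hv'K : v' ∈ K := Submodule.smul_mem _ _ (hPmem x)
      have h5 : P v' = v' := hPleft v' hv'K
      simp [hQdef, ContinuousLinearMap.sub_apply, h5]
    have hkey : ‖u‖ ≤ C * ‖u + v'‖ := by
      have h1 : ‖Q (u + v')‖ = ‖u‖ := by rw [map_add, hQu, hQv', add_zero]
      calc ‖u‖ = ‖Q (u + v')‖ := h1.symm
        _ ≤ ‖Q‖ * ‖u + v'‖ := Q.le_opNorm _
        _ ≤ C * ‖u + v'‖ := by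
            apply mul_le_mul_of_nonneg_right _ (norm_nonneg _)
            rw [hC]; linarith
    set r : ℝ := (⟪u, v⟫_ℂ).re with hr
    have hexp : ‖u + v'‖ ^ 2 = ‖u‖ ^ 2 + 2 * (c * r) + ‖u‖ ^ 2 := by
      have h6 := @norm_add_sq ℂ X _ _ _ u v'
      rw [hnv'] at h6
      rw [h6]
      congr 2
      rw [hv', inner_smul_right]
      simp [hr]
    have hsq : ‖u‖ ^ 2 ≤ C ^ 2 * ‖u + v'‖ ^ 2 := by
      have h7 := mul_self_le_mul_self (norm_nonneg u) hkey
      calc ‖u‖ ^ 2 = ‖u‖ * ‖u‖ := sq ‖u‖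
        _ ≤ (C * ‖u + v'‖) * (C * ‖u + v'‖) := h7
        _ = C ^ 2 * ‖u + v'‖ ^ 2 := by ring
    rw [hexp] at hsq
    have hsq' : ‖u‖ ^ 2 * ‖v‖ ≤ C ^ 2 * (2 * ‖u‖ ^ 2 * ‖v‖ + 2 * ‖u‖ * r) := by
      have h8 := mul_le_mul_of_nonneg_right hsq hv0.le
      have e : C ^ 2 * (‖u‖ ^ 2 + 2 * (c * r) + ‖u‖ ^ 2) * ‖v‖
          = C ^ 2 * (2 * ‖u‖ ^ 2 * ‖v‖ + 2 * r * (c * ‖v‖)) := by ring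
      rw [e, hcb] at h8
      calc ‖u‖ ^ 2 * ‖v‖ ≤ C ^ 2 * (2 * ‖u‖ ^ 2 * ‖v‖ + 2 * r * ‖u‖) := h8
        _ = C ^ 2 * (2 * ‖u‖ ^ 2 * ‖v‖ + 2 * ‖u‖ * r) := by ring
    have h2C : (0:ℝ) < 2 * C ^ 2 := by positivity
    rw [show (-1 + 1 / (2 * C ^ 2)) * (‖u‖ * ‖v‖)
        = (-(2 * C ^ 2) * (‖u‖ * ‖v‖) + ‖u‖ * ‖v‖) / (2 * C ^ 2) by
      field_simp, div_le_iff₀ h2C]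
    nlinarith [hsq', hu0, hv0, mul_pos hu0 hv0]
end

section
/- Let X be a complex Hilbert space and A a bounded operator on X with closed range. Suppose there exists a bounded operator T on X with T(ker A) = ker A, with A + t₀·T invertible for some t₀ > 0, and δ > 0 such that Re⟨A x, T x⟩ ≥ (-1 + δ)·‖A x‖·‖T x‖ whenever A x ≠ 0 and T x ≠ 0. Then X = R(A) ⊕ ker(A). -/
open scoped InnerProductSpace

set_option maxHeartbeats 2000000 in
theorem stmt_18 {X : Type*} [NormedAddCommGroup X] [InnerProductSpace ℂ X] [CompleteSpace X]
    (A : X →L[ℂ] X) (hcl : IsClosed (LinearMap.range (A : X →ₗ[ℂ] X) : Set X))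
    (T : X →L[ℂ] X)
    (hker : T '' (LinearMap.ker (A : X →ₗ[ℂ] X) : Set X) = (LinearMap.ker (A : X →ₗ[ℂ] X) : Set X))
    (t₀ : ℝ) (ht₀ : 0 < t₀) (hinv : IsUnit (A + (t₀ : ℂ) • T))
    (δ : ℝ) (hδ : 0 < δ)
    (h : ∀ x : X, A x ≠ 0 → T x ≠ 0 →
      (-1 + δ) * (‖A x‖ * ‖T x‖) ≤ (⟪A x, T x⟫_ℂ).re) :
    LinearMap.range (A : X →ₗ[ℂ] X) ⊔ LinearMap.ker (A : X →ₗ[ℂ] X) = ⊤ ∧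
      LinearMap.range (A : X →ₗ[ℂ] X) ⊓ LinearMap.ker (A : X →ₗ[ℂ] X) = ⊥ := by
  classical
  set δ' : ℝ := min δ 1 with hδ'def
  have hδ'pos : 0 < δ' := lt_min hδ one_pos
  have hδ'le1 : δ' ≤ 1 := min_le_right _ _
  have hδ'leδ : δ' ≤ δ := min_le_left _ _
  -- uniform version of the angle hypothesis
  have hre : ∀ x : X, (-1 + δ') * (‖A x‖ * ‖T x‖) ≤ (⟪A x, T x⟫_ℂ).re := by
    intro x
    by_cases hA : A x = 0
    · simp [hA]
    by_cases hT : T x = 0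
    · simp [hT]
    calc (-1 + δ') * (‖A x‖ * ‖T x‖) ≤ (-1 + δ) * (‖A x‖ * ‖T x‖) := by
          apply mul_le_mul_of_nonneg_right (by linarith) (by positivity)
      _ ≤ _ := h x hA hT
  -- gap estimate between the range and the kernel
  have gap : ∀ x k : X, k ∈ LinearMap.ker (A : X →ₗ[ℂ] X) →
      ‖(⟪A x, k⟫_ℂ)‖ ≤ (1 - δ') * (‖A x‖ * ‖k‖) := by
    intro x k hk
    by_cases hc : (⟪A x, k⟫_ℂ) = 0
    · rw [hc]; simp only [norm_zero]; exact mul_nonneg (by linarith) (by positivity)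
    have hk0 : k ≠ 0 := fun h0 => hc (by simp [h0])
    have hknorm : 0 < ‖k‖ := norm_pos_iff.mpr hk0
    have hkmem : k ∈ T '' (LinearMap.ker (A : X →ₗ[ℂ] X) : Set X) := by
      rw [hker]; exact hk
    obtain ⟨w, hw, hTw⟩ := hkmem
    have hw0 : A w = 0 := hw
    set c : ℂ := ⟪A x, k⟫_ℂ with hcdef
    set lam : ℂ := -(‖c‖ : ℂ) / c with hlamdef
    have hcn : (0:ℝ) < ‖c‖ := norm_pos_iff.mpr hc
    have hlam_norm : ‖lam‖ = 1 := by
      rw [hlamdef, norm_div, norm_neg, Complex.norm_real, Real.norm_eq_abs,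
        abs_of_nonneg (norm_nonneg c), div_self (ne_of_gt hcn)]
    have hlamc : lam * c = -(‖c‖ : ℂ) := by
      rw [hlamdef]; field_simp
    by_contra hcon
    push_neg at hcon
    set d : ℝ := ‖c‖ - (1 - δ') * (‖A x‖ * ‖k‖) with hddef
    have hdpos : 0 < d := by simp only [hddef]; linarith
    set C₁ : ℝ := (⟪A x, T x⟫_ℂ).re + (1 - δ') * (‖A x‖ * ‖T x‖) with hC₁def
    set s : ℝ := max (‖T x‖ / ‖k‖ + 1) ((C₁ + 1) / d) with hsdef
    have hs1 : ‖T x‖ / ‖k‖ + 1 ≤ s := le_max_left _ _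
    have hs2 : (C₁ + 1) / d ≤ s := le_max_right _ _
    have hspos : 0 < s := lt_of_lt_of_le (by positivity) hs1
    set y : X := x + ((s : ℂ) * lam) • w with hydef
    have hAy : A y = A x := by
      simp [hydef, hw0]
    have hsl : ‖((s : ℂ) * lam)‖ = s := by
      rw [norm_mul, hlam_norm, Complex.norm_real, Real.norm_eq_abs,
        abs_of_pos hspos, mul_one]
    have hTy : T y = T x + ((s : ℂ) * lam) • k := by
      simp [hydef, hTw]
    -- the inequality from the hypothesis at the point y
    have hineq := hre y
    rw [hAy, hTy] at hineq
    have hinner : (⟪A x, T x + ((s : ℂ) * lam) • k⟫_ℂ).re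
        = (⟪A x, T x⟫_ℂ).re - s * ‖c‖ := by
      rw [inner_add_right, inner_smul_right]
      have : (s : ℂ) * lam * c = -((s * ‖c‖ : ℝ) : ℂ) := by
        rw [mul_assoc, hlamc]; push_cast; ring
      rw [← hcdef, this]
      simp
      ring
    rw [hinner] at hineq
    have hnormTy : ‖T x + ((s : ℂ) * lam) • k‖ ≤ ‖T x‖ + s * ‖k‖ := by
      calc ‖T x + ((s : ℂ) * lam) • k‖ ≤ ‖T x‖ + ‖((s : ℂ) * lam) • k‖ := norm_add_le _ _
        _ = ‖T x‖ + s * ‖k‖ := by rw [norm_smul, hsl]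
    have hlhs : (-1 + δ') * (‖A x‖ * (‖T x‖ + s * ‖k‖))
        ≤ (-1 + δ') * (‖A x‖ * ‖T x + ((s : ℂ) * lam) • k‖) := by
      apply mul_le_mul_of_nonpos_left _ (by linarith)
      exact mul_le_mul_of_nonneg_left hnormTy (norm_nonneg _)
    have hmain : s * d ≤ C₁ := by
      have := le_trans hlhs hineq
      simp only [hddef, hC₁def]
      nlinarith [this]
    have hsd : C₁ + 1 ≤ s * d := by
      rw [div_le_iff₀ hdpos] at hs2
      linarith
    linarith
  -- the key quadratic lower bound
  have key : ∀ t : ℝ, 0 ≤ t → ∀ x : X,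
      δ' * (‖A x‖ ^ 2 + t ^ 2 * ‖T x‖ ^ 2) ≤ ‖A x + (t : ℂ) • T x‖ ^ 2 := by
    intro t ht x
    have hexp : ‖A x + (t : ℂ) • T x‖ ^ 2
        = ‖A x‖ ^ 2 + 2 * (t * (⟪A x, T x⟫_ℂ).re) + t ^ 2 * ‖T x‖ ^ 2 := by
      rw [norm_add_sq (𝕜 := ℂ), inner_smul_right, norm_smul, Complex.norm_real,
        Real.norm_eq_abs, mul_pow, sq_abs]
      simp [Complex.mul_re]
    rw [hexp]
    have h1 : 0 ≤ t * ((⟪A x, T x⟫_ℂ).re - (-1 + δ') * (‖A x‖ * ‖T x‖)) :=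
      mul_nonneg ht (by linarith [hre x])
    nlinarith [mul_nonneg (by linarith : (0:ℝ) ≤ 1 - δ')
      (sq_nonneg (‖A x‖ - t * ‖T x‖)), sq_nonneg (‖A x‖ - t * ‖T x‖)]
  -- trivial cases
  rcases subsingleton_or_nontrivial X with hX | hX
  · constructor
    · ext x; simp [Subsingleton.elim x 0]
    · ext x; simp [Subsingleton.elim x 0]
  by_cases hT0 : T = 0
  · have hK : LinearMap.ker (A : X →ₗ[ℂ] X) = ⊥ := by
      rw [Submodule.eq_bot_iff]
      intro x hx
      have hx' : x ∈ T '' (LinearMap.ker (A : X →ₗ[ℂ] X) : Set X) := by rw [hker]; exact hx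
      obtain ⟨z, _, hz⟩ := hx'
      rw [hT0] at hz; simpa using hz.symm
    have hA : IsUnit A := by
      have h5 : A + (t₀:ℂ) • T = A := by rw [hT0]; simp
      rwa [h5] at hinv
    obtain ⟨v, hv⟩ := hA
    have hR : LinearMap.range (A : X →ₗ[ℂ] X) = ⊤ := by
      rw [LinearMap.range_eq_top]
      intro y
      refine ⟨(↑v⁻¹ : X →L[ℂ] X) y, ?_⟩
      have h6 : (↑v * ↑v⁻¹ : X →L[ℂ] X) y = y := by rw [Units.mul_inv]; rfl
      rw [← hv]
      change (↑v * ↑v⁻¹ : X →L[ℂ] X) y = y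
      exact h6
    rw [hK, hR]; simp
  -- main case
  haveI hNT : Nontrivial (X →L[ℂ] X) := by
    obtain ⟨x0, hx0⟩ := exists_ne (0 : X)
    refine ⟨1, 0, fun hcon => hx0 ?_⟩
    have := ContinuousLinearMap.ext_iff.mp hcon x0
    simpa using this
  have hTnorm : 0 < ‖T‖ := norm_pos_iff.mpr hT0
  obtain ⟨u₀, hu₀⟩ := hinv
  set c₀ : ℝ := (‖(↑u₀⁻¹ : X →L[ℂ] X)‖ + 1)⁻¹ with hc₀def
  have hc₀pos : 0 < c₀ := by positivity
  have hc₀ : ∀ x : X, c₀ * ‖x‖ ≤ ‖A x + (t₀ : ℂ) • T x‖ := by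
    intro x
    have h1 : ‖x‖ ≤ (‖(↑u₀⁻¹ : X →L[ℂ] X)‖ + 1) * ‖(A + (t₀:ℂ) • T) x‖ := by
      have h2 : (↑u₀⁻¹ : X →L[ℂ] X) ((A + (t₀:ℂ) • T) x) = x := by
        rw [← hu₀, ← ContinuousLinearMap.mul_apply, Units.inv_mul]; rfl
      calc ‖x‖ = ‖(↑u₀⁻¹ : X →L[ℂ] X) ((A + (t₀:ℂ) • T) x)‖ := by rw [h2]
        _ ≤ ‖(↑u₀⁻¹ : X →L[ℂ] X)‖ * ‖(A + (t₀:ℂ) • T) x‖ :=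
            ContinuousLinearMap.le_opNorm _ _
        _ ≤ _ := by
            apply mul_le_mul_of_nonneg_right _ (norm_nonneg _); linarith
    have h3 : (A + (t₀:ℂ) • T) x = A x + (t₀:ℂ) • T x := rfl
    rw [h3] at h1
    calc c₀ * ‖x‖ ≤ c₀ * ((‖(↑u₀⁻¹ : X →L[ℂ] X)‖ + 1) * ‖A x + (t₀:ℂ) • T x‖) :=
          mul_le_mul_of_nonneg_left h1 hc₀pos.le
      _ = ‖A x + (t₀:ℂ) • T x‖ := by rw [hc₀def]; field_simp
  set β : ℝ := Real.sqrt (δ' / 2) * c₀ / t₀ with hβdef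
  have hsqδ : 0 < Real.sqrt (δ'/2) := Real.sqrt_pos.mpr (by linarith)
  have hβpos : 0 < β := by positivity
  have lb : ∀ t : ℝ, 0 < t → t ≤ t₀ → ∀ x : X, β * t * ‖x‖ ≤ ‖A x + (t:ℂ) • T x‖ := by
    intro t ht htle x
    have hk := key t (le_of_lt ht) x
    have hsq : (β * t * ‖x‖) ^ 2 ≤ ‖A x + (t:ℂ) • T x‖ ^ 2 := by
      have hβ2 : β ^ 2 = (δ'/2) * c₀ ^ 2 / t₀ ^ 2 := by
        rw [hβdef, div_pow, mul_pow, Real.sq_sqrt (by linarith : (0:ℝ) ≤ δ'/2)]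
      have hcx := hc₀ x
      have hATx : ‖A x + (t₀:ℂ) • T x‖ ≤ ‖A x‖ + t₀ * ‖T x‖ := by
        calc ‖A x + (t₀:ℂ) • T x‖ ≤ ‖A x‖ + ‖(t₀:ℂ) • T x‖ := norm_add_le _ _
          _ = ‖A x‖ + t₀ * ‖T x‖ := by
              rw [norm_smul, Complex.norm_real, Real.norm_eq_abs, abs_of_pos ht₀]
      have hcx2 : c₀ * ‖x‖ ≤ ‖A x‖ + t₀ * ‖T x‖ := le_trans hcx hATx
      have hc2 : (c₀ * ‖x‖)^2 ≤ 2 * (‖A x‖^2 + t₀^2 * ‖T x‖^2) := by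
        have hsq2 : (c₀ * ‖x‖)^2 ≤ (‖A x‖ + t₀ * ‖T x‖)^2 :=
          pow_le_pow_left₀ (by positivity) hcx2 2
        nlinarith [sq_nonneg (‖A x‖ - t₀ * ‖T x‖), hsq2]
      have ht2 : t^2 ≤ t₀^2 := by nlinarith
      calc (β * t * ‖x‖)^2 = (δ'/2) * (c₀*‖x‖)^2 * (t^2/t₀^2) := by
            rw [mul_pow, mul_pow, hβ2]; field_simp
        _ ≤ (δ'/2) * (2*(‖A x‖^2 + t₀^2*‖T x‖^2)) * (t^2/t₀^2) := by
            apply mul_le_mul_of_nonneg_right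
              (mul_le_mul_of_nonneg_left hc2 (by linarith)) (by positivity)
        _ = δ' * ((t^2/t₀^2) * ‖A x‖^2 + t^2 * ‖T x‖^2) := by field_simp
        _ ≤ δ' * (‖A x‖^2 + t^2*‖T x‖^2) := by
            apply mul_le_mul_of_nonneg_left _ (le_of_lt hδ'pos)
            have h7 : t^2/t₀^2 ≤ 1 := by rw [div_le_one (by positivity)]; exact ht2
            nlinarith [sq_nonneg ‖A x‖]
        _ ≤ _ := hk
    have h0 : 0 ≤ β * t * ‖x‖ := by positivity
    have h5 := Real.sqrt_le_sqrt hsq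
    rwa [Real.sqrt_sq h0, Real.sqrt_sq (norm_nonneg _)] at h5
  -- the contraction ratio
  set r : ℝ := max (1 - β / (2 * ‖T‖)) (1/2) with hrdef
  have hr1 : r < 1 := by
    rw [hrdef]; apply max_lt _ (by norm_num)
    have : 0 < β / (2*‖T‖) := by positivity
    linarith
  have hrhalf : (1:ℝ)/2 ≤ r := le_max_right _ _
  have hrpos : 0 < r := by linarith
  have hrT : (1 - r) * ‖T‖ ≤ β / 2 := by
    rcases le_total (1 - β / (2*‖T‖)) (1/2) with hcase | hcase
    · have hr2 : r = 1/2 := by rw [hrdef, max_eq_right hcase]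
      have h2 : (1:ℝ)/2 ≤ β/(2*‖T‖) := by linarith
      rw [le_div_iff₀ (by positivity)] at h2
      rw [hr2]; linarith
    · have hr2 : r = 1 - β / (2*‖T‖) := by rw [hrdef, max_eq_left hcase]
      have h3 : β / (2*‖T‖) * ‖T‖ = β/2 := by field_simp
      rw [hr2]; rw [show (1 - (1 - β / (2 * ‖T‖))) = β/(2*‖T‖) from by ring]
      linarith
  -- invertibility of A + tT for t = r^n t₀
  have units : ∀ n : ℕ, IsUnit (A + ((r ^ n * t₀ : ℝ) : ℂ) • T) := by
    intro n
    induction n with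
    | zero => exact ⟨u₀, by rw [hu₀]; norm_num⟩
    | succ n ih =>
      obtain ⟨v, hv⟩ := ih
      have hrn1 : r ^ n ≤ 1 := pow_le_one₀ (le_of_lt hrpos) (le_of_lt hr1)
      have htpos : 0 < r ^ n * t₀ := by positivity
      have htle : r ^ n * t₀ ≤ t₀ := by nlinarith
      set t : ℝ := r ^ n * t₀ with htdef
      have hvnorm : ‖(↑v⁻¹ : X →L[ℂ] X)‖ ≤ (β * t)⁻¹ := by
        apply ContinuousLinearMap.opNorm_le_bound _ (by positivity)
        intro y
        have h1 := lb t htpos htle ((↑v⁻¹ : X →L[ℂ] X) y)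
        have h2 : A ((↑v⁻¹ : X →L[ℂ] X) y) + (t:ℂ) • T ((↑v⁻¹ : X →L[ℂ] X) y) = y := by
          have h8 : (A + (t:ℂ) • T) ((↑v⁻¹ : X →L[ℂ] X) y) = y := by
            rw [← hv, ← ContinuousLinearMap.mul_apply, Units.mul_inv]; rfl
          simpa using h8
        rw [h2] at h1
        rw [inv_mul_eq_div, le_div_iff₀ (by positivity)]
        linarith
      have hvpos : 0 < ‖(↑v⁻¹ : X →L[ℂ] X)‖ := by
        have h9 : (↑v⁻¹ : X →L[ℂ] X) ≠ 0 := Units.ne_zero v⁻¹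
        exact norm_pos_iff.mpr h9
      have hβt : β * t ≤ ‖(↑v⁻¹ : X →L[ℂ] X)‖⁻¹ := by
        have h4 : β * t * ‖(↑v⁻¹ : X →L[ℂ] X)‖ ≤ 1 := by
          calc β * t * ‖(↑v⁻¹ : X →L[ℂ] X)‖ ≤ β * t * (β * t)⁻¹ :=
                mul_le_mul_of_nonneg_left hvnorm (by positivity)
            _ = 1 := mul_inv_cancel₀ (by positivity)
        rw [← one_div, le_div_iff₀ hvpos]
        exact h4
      have hdiff : ‖(A + ((r^(n+1) * t₀ : ℝ):ℂ) • T) - ↑v‖ < ‖(↑v⁻¹ : X →L[ℂ] X)‖⁻¹ := by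
        rw [hv]
        have heq : (A + ((r^(n+1) * t₀ : ℝ):ℂ) • T) - (A + (t:ℂ) • T)
            = (((r^(n+1) * t₀ - t : ℝ)):ℂ) • T := by
          rw [add_sub_add_left_eq_sub, ← sub_smul]; norm_cast
        rw [heq]
        have hts : r^(n+1) * t₀ - t = -((1-r)*t) := by rw [htdef, pow_succ]; ring
        have hnorm : ‖(((r^(n+1) * t₀ - t : ℝ)):ℂ) • T‖ = (1 - r) * t * ‖T‖ := by
          rw [norm_smul, Complex.norm_real, Real.norm_eq_abs, hts, abs_neg,
            abs_of_nonneg (by nlinarith)]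
        rw [hnorm]
        calc (1-r) * t * ‖T‖ = (1-r) * ‖T‖ * t := by ring
          _ ≤ β/2 * t := mul_le_mul_of_nonneg_right hrT htpos.le
          _ < β * t := by nlinarith
          _ ≤ _ := hβt
      exact ⟨Units.ofNearby v _ hdiff, rfl⟩
  -- A is bounded below on the orthogonal complement of its kernel
  haveI hKcomp : CompleteSpace (LinearMap.ker (A : X →ₗ[ℂ] X)) :=
    (ContinuousLinearMap.isClosed_ker A).completeSpace_coe
  haveI hRcomp : CompleteSpace (LinearMap.range (A : X →ₗ[ℂ] X)) := hcl.completeSpace_coe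
  have hm : ∃ C : ℝ, 0 < C ∧ ∀ p : X, p ∈ (LinearMap.ker (A : X →ₗ[ℂ] X))ᗮ → ‖p‖ ≤ C * ‖A p‖ := by
    set φ : ((LinearMap.ker (A : X →ₗ[ℂ] X))ᗮ : Submodule ℂ X) →L[ℂ] (LinearMap.range (A : X →ₗ[ℂ] X) : Submodule ℂ X) :=
      ContinuousLinearMap.codRestrict
        (A.comp (Submodule.subtypeL (LinearMap.ker (A : X →ₗ[ℂ] X))ᗮ)) (LinearMap.range (A : X →ₗ[ℂ] X))
        (fun p => LinearMap.mem_range.mpr ⟨↑p, rfl⟩) with hφdef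
    have hφapp : ∀ p : ((LinearMap.ker (A : X →ₗ[ℂ] X))ᗮ : Submodule ℂ X), (φ p : X) = A ↑p := fun p => rfl
    have hφinj : LinearMap.ker (φ : ((LinearMap.ker (A : X →ₗ[ℂ] X))ᗮ : Submodule ℂ X) →ₗ[ℂ] (LinearMap.range (A : X →ₗ[ℂ] X) : Submodule ℂ X)) = ⊥ := by
      rw [LinearMap.ker_eq_bot']
      intro p hp
      change φ p = 0 at hp
      have h1 : A ↑p = 0 := by rw [← hφapp p, hp]; rfl
      have h2 : (↑p : X) ∈ LinearMap.ker (A : X →ₗ[ℂ] X) := LinearMap.mem_ker.mpr h1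
      have h3 : (↑p : X) = 0 :=
        Submodule.disjoint_def.mp (Submodule.orthogonal_disjoint (LinearMap.ker (A : X →ₗ[ℂ] X))) _ h2 p.2
      exact Subtype.ext h3
    have hφsurj : LinearMap.range (φ : ((LinearMap.ker (A : X →ₗ[ℂ] X))ᗮ : Submodule ℂ X) →ₗ[ℂ] (LinearMap.range (A : X →ₗ[ℂ] X) : Submodule ℂ X)) = ⊤ := by
      rw [LinearMap.range_eq_top]
      intro y
      obtain ⟨z, hz⟩ := LinearMap.mem_range.mp y.2
      have hp : z - ↑(Submodule.orthogonalProjection (LinearMap.ker (A : X →ₗ[ℂ] X)) z) ∈ (LinearMap.ker (A : X →ₗ[ℂ] X))ᗮ :=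
        Submodule.sub_starProjection_mem_orthogonal z
      refine ⟨⟨_, hp⟩, ?_⟩
      apply Subtype.ext
      show (φ ⟨_, hp⟩ : X) = y
      rw [hφapp]
      have hq0 : (↑(Submodule.orthogonalProjection (LinearMap.ker (A : X →ₗ[ℂ] X)) z) : X) ∈ LinearMap.ker (A : X →ₗ[ℂ] X) :=
        (Submodule.orthogonalProjection (LinearMap.ker (A : X →ₗ[ℂ] X)) z).2
      have hq : A ↑(Submodule.orthogonalProjection (LinearMap.ker (A : X →ₗ[ℂ] X)) z) = 0 := LinearMap.mem_ker.mp hq0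
      rw [map_sub, hq, sub_zero]
      exact hz
    set e := ContinuousLinearEquiv.ofBijective φ hφinj hφsurj with hedef
    refine ⟨‖(e.symm : (LinearMap.range (A : X →ₗ[ℂ] X) : Submodule ℂ X) →L[ℂ]
      ((LinearMap.ker (A : X →ₗ[ℂ] X))ᗮ : Submodule ℂ X))‖ + 1, by positivity, ?_⟩
    intro p hp
    have hnorme : ‖e ⟨p, hp⟩‖ = ‖A p‖ := by
      have h4 : e ⟨p, hp⟩ = φ ⟨p, hp⟩ := by
        rw [hedef, ContinuousLinearEquiv.coeFn_ofBijective]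
      rw [h4]
      have h5 : ‖φ ⟨p, hp⟩‖ = ‖(φ ⟨p, hp⟩ : X)‖ := rfl
      rw [h5, hφapp]
    have hle := (e.symm : (LinearMap.range (A : X →ₗ[ℂ] X) : Submodule ℂ X) →L[ℂ]
      ((LinearMap.ker (A : X →ₗ[ℂ] X))ᗮ : Submodule ℂ X)).le_opNorm (e ⟨p, hp⟩)
    rw [ContinuousLinearEquiv.coe_coe, e.symm_apply_apply, hnorme] at hle
    have h6 : ‖(⟨p, hp⟩ : ((LinearMap.ker (A : X →ₗ[ℂ] X))ᗮ : Submodule ℂ X))‖ = ‖p‖ := rfl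
    rw [h6] at hle
    nlinarith [norm_nonneg (A p), hle]
  -- lower bound for sums from the gap estimate
  have sumlb : ∀ z k : X, z ∈ LinearMap.range (A : X →ₗ[ℂ] X) → k ∈ LinearMap.ker (A : X →ₗ[ℂ] X) →
      δ' * (‖z‖^2 + ‖k‖^2) ≤ ‖z + k‖^2 := by
    intro z k hz hk
    obtain ⟨x, hx⟩ := LinearMap.mem_range.mp hz
    have hg := gap x k hk
    rw [show A x = z from hx] at hg
    have hexp := norm_add_sq (𝕜 := ℂ) z k
    have habs : |RCLike.re (⟪z, k⟫_ℂ)| ≤ ‖⟪z, k⟫_ℂ‖ := RCLike.abs_re_le_norm _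
    obtain ⟨habs1, habs2⟩ := abs_le.mp habs
    nlinarith [sq_nonneg (‖z‖ - ‖k‖), hg, hexp]
  -- the sum of the range and the kernel is closed
  have hMclosed : IsClosed ((LinearMap.range (A : X →ₗ[ℂ] X) ⊔ LinearMap.ker (A : X →ₗ[ℂ] X) : Submodule ℂ X) : Set X) := by
    set Φ := ((LinearMap.range (A : X →ₗ[ℂ] X)).subtypeL).coprod ((LinearMap.ker (A : X →ₗ[ℂ] X)).subtypeL) with hΦdef
    have hΦapp : ∀ v, Φ v = (↑v.1 + ↑v.2 : X) := fun v => rfl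
    have hδs : 0 < Real.sqrt δ' := Real.sqrt_pos.mpr hδ'pos
    have hbound : ∀ v, ‖v‖ ≤ ((Real.sqrt δ')⁻¹).toNNReal * ‖Φ v‖ := by
      intro v
      have hco : (((Real.sqrt δ')⁻¹).toNNReal : ℝ) = (Real.sqrt δ')⁻¹ :=
        Real.coe_toNNReal _ (by positivity)
      rw [hco, hΦapp]
      have hlow := sumlb ↑v.1 ↑v.2 v.1.2 v.2.2
      have hmax : ‖v‖ = max ‖v.1‖ ‖v.2‖ := rfl
      have hsqle : (Real.sqrt δ' * ‖v‖)^2 ≤ ‖(↑v.1 + ↑v.2 : X)‖^2 := by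
        rw [mul_pow, Real.sq_sqrt hδ'pos.le, hmax]
        have e1 : ‖v.1‖ = ‖(↑v.1 : X)‖ := rfl
        have e2 : ‖v.2‖ = ‖(↑v.2 : X)‖ := rfl
        rcases max_cases ‖v.1‖ ‖v.2‖ with ⟨heq, _⟩ | ⟨heq, _⟩ <;> rw [heq] <;>
          [rw [e1]; rw [e2]] <;>
          nlinarith [mul_nonneg hδ'pos.le (sq_nonneg ‖(↑v.1 : X)‖),
            mul_nonneg hδ'pos.le (sq_nonneg ‖(↑v.2 : X)‖), hlow]
      have h1 : Real.sqrt δ' * ‖v‖ ≤ ‖(↑v.1 + ↑v.2 : X)‖ := by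
        have h5 := Real.sqrt_le_sqrt hsqle
        rwa [Real.sqrt_sq (by positivity), Real.sqrt_sq (norm_nonneg _)] at h5
      calc ‖v‖ = (Real.sqrt δ')⁻¹ * (Real.sqrt δ' * ‖v‖) := by
            rw [← mul_assoc, inv_mul_cancel₀ (ne_of_gt hδs), one_mul]
        _ ≤ (Real.sqrt δ')⁻¹ * ‖(↑v.1 + ↑v.2 : X)‖ :=
            mul_le_mul_of_nonneg_left h1 (by positivity)
    have hanti := ContinuousLinearMap.antilipschitz_of_bound Φ hbound
    have hrangeΦ : Set.range Φ
        = ((LinearMap.range (A : X →ₗ[ℂ] X) ⊔ LinearMap.ker (A : X →ₗ[ℂ] X) : Submodule ℂ X) : Set X) := by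
      ext w
      constructor
      · rintro ⟨v, rfl⟩
        rw [hΦapp]
        exact Submodule.add_mem_sup v.1.2 v.2.2
      · intro hw
        obtain ⟨y, hy, z, hz, hyz⟩ := Submodule.mem_sup.mp hw
        exact ⟨(⟨y, hy⟩, ⟨z, hz⟩), by rw [hΦapp]; exact hyz⟩
    rw [← hrangeΦ]
    exact hanti.isClosed_range Φ.uniformContinuous
  -- the orthogonal complement of the sum is trivial
  have horth : (LinearMap.range (A : X →ₗ[ℂ] X) ⊔ LinearMap.ker (A : X →ₗ[ℂ] X) : Submodule ℂ X)ᗮ = ⊥ := by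
    rw [Submodule.eq_bot_iff]
    intro u hu
    by_contra hu0
    have hun : 0 < ‖u‖ := norm_pos_iff.mpr hu0
    obtain ⟨C, hC, hCb⟩ := hm
    have hδs : 0 < Real.sqrt δ' := Real.sqrt_pos.mpr hδ'pos
    obtain ⟨n, hn⟩ := exists_pow_lt_of_lt_one
      (show 0 < Real.sqrt δ' / (t₀ * ‖T‖ * C) by positivity) hr1
    have htpos : 0 < r ^ n * t₀ := by positivity
    have hrn1 : r ^ n ≤ 1 := pow_le_one₀ hrpos.le hr1.le
    set t : ℝ := r ^ n * t₀ with htdef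
    have h3 : t * ‖T‖ * C < Real.sqrt δ' := by
      have h20 : r ^ n * (t₀ * ‖T‖ * C) < Real.sqrt δ' := by
        rw [← lt_div_iff₀ (show (0:ℝ) < t₀ * ‖T‖ * C by positivity)]
        exact hn
      calc t * ‖T‖ * C = r ^ n * (t₀ * ‖T‖ * C) := by rw [htdef]; ring
        _ < _ := h20
    obtain ⟨v, hv⟩ := units n
    set x : X := (↑v⁻¹ : X →L[ℂ] X) u with hxdef
    have hSx : A x + (t:ℂ) • T x = u := by
      have h8 : (A + (t:ℂ) • T) x = u := by
        rw [hxdef, ← hv, ← ContinuousLinearMap.mul_apply, Units.mul_inv]; rfl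
      rw [← h8]; rfl
    set q : X := ↑(Submodule.orthogonalProjection (LinearMap.ker (A : X →ₗ[ℂ] X)) x) with hqdef
    set p : X := x - q with hpdef
    have hqmem : q ∈ LinearMap.ker (A : X →ₗ[ℂ] X) := (Submodule.orthogonalProjection (LinearMap.ker (A : X →ₗ[ℂ] X)) x).2
    have hpmem : p ∈ (LinearMap.ker (A : X →ₗ[ℂ] X))ᗮ := Submodule.sub_starProjection_mem_orthogonal x
    have hAq : A q = 0 := LinearMap.mem_ker.mp hqmem
    have hAp : A p = A x := by rw [hpdef, map_sub, hAq, sub_zero]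
    have hTq : T q ∈ LinearMap.ker (A : X →ₗ[ℂ] X) := by
      have h21 : T q ∈ T '' (LinearMap.ker (A : X →ₗ[ℂ] X) : Set X) := Set.mem_image_of_mem _ hqmem
      rwa [hker] at h21
    have hu_eq : u = A p + (t:ℂ) • T p + (t:ℂ) • T q := by
      rw [← hSx]
      have hx_eq : x = p + q := by rw [hpdef]; abel
      calc A x + (t:ℂ) • T x = A (p+q) + (t:ℂ) • T (p+q) := by rw [← hx_eq]
        _ = A p + (t:ℂ) • T p + (t:ℂ) • T q := by
            rw [map_add, map_add, hAq, add_zero, smul_add]; abel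
    have hinner1 : ⟪A p, u⟫_ℂ = 0 :=
      (Submodule.mem_orthogonal _ u).mp hu (A p)
        (Submodule.mem_sup_left (LinearMap.mem_range.mpr ⟨p, rfl⟩))
    have hinner2 : ⟪T q, u⟫_ℂ = 0 :=
      (Submodule.mem_orthogonal _ u).mp hu (T q) (Submodule.mem_sup_right hTq)
    have hiu : (⟪u, u⟫_ℂ) = (t:ℂ) * ⟪T p, u⟫_ℂ := by
      have h9 : ⟪u, u⟫_ℂ = ⟪A p + (t:ℂ) • T p + (t:ℂ) • T q, u⟫_ℂ := by rw [← hu_eq]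
      rw [h9, inner_add_left, inner_add_left, hinner1, inner_smul_left, inner_smul_left,
        hinner2, mul_zero, zero_add, add_zero, Complex.conj_ofReal]
    have h1 : ‖u‖^2 ≤ t * ‖T‖ * (C * ‖A x‖) * ‖u‖ := by
      have h10 : ‖(⟪u, u⟫_ℂ)‖ = ‖u‖^2 := by
        rw [inner_self_eq_norm_sq_to_K, norm_pow, RCLike.norm_ofReal, abs_norm]
      have h11 : ‖(⟪u, u⟫_ℂ)‖ = t * ‖⟪T p, u⟫_ℂ‖ := by
        rw [hiu, norm_mul, Complex.norm_real, Real.norm_eq_abs, abs_of_pos htpos]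
      have h12 : ‖⟪T p, u⟫_ℂ‖ ≤ ‖T p‖ * ‖u‖ := norm_inner_le_norm _ _
      have h13 : ‖T p‖ ≤ ‖T‖ * ‖p‖ := T.le_opNorm p
      have h14 : ‖p‖ ≤ C * ‖A p‖ := hCb p hpmem
      have h15 : ‖p‖ ≤ C * ‖A x‖ := by rw [← hAp]; exact h14
      rw [← h10, h11]
      calc t * ‖⟪T p, u⟫_ℂ‖ ≤ t * (‖T p‖ * ‖u‖) := mul_le_mul_of_nonneg_left h12 htpos.le
        _ ≤ t * ((‖T‖ * (C * ‖A x‖)) * ‖u‖) := by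
            apply mul_le_mul_of_nonneg_left _ htpos.le
            apply mul_le_mul_of_nonneg_right _ (norm_nonneg u)
            calc ‖T p‖ ≤ ‖T‖ * ‖p‖ := h13
              _ ≤ ‖T‖ * (C * ‖A x‖) := mul_le_mul_of_nonneg_left h15 (norm_nonneg T)
        _ = t * ‖T‖ * (C * ‖A x‖) * ‖u‖ := by ring
    have h2 : Real.sqrt δ' * ‖A x‖ ≤ ‖u‖ := by
      have hk2 := key t htpos.le x
      rw [hSx] at hk2
      have h16 : (Real.sqrt δ' * ‖A x‖)^2 ≤ ‖u‖^2 := by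
        rw [mul_pow, Real.sq_sqrt hδ'pos.le]
        nlinarith [sq_nonneg (t * ‖T x‖), hδ'pos, hk2]
      have h5 := Real.sqrt_le_sqrt h16
      rwa [Real.sqrt_sq (by positivity), Real.sqrt_sq (norm_nonneg u)] at h5
    by_cases hAx : ‖A x‖ = 0
    · rw [hAx] at h1
      nlinarith [mul_pos hun hun, h1]
    have hAxpos : 0 < ‖A x‖ := lt_of_le_of_ne (norm_nonneg _) (Ne.symm hAx)
    have h17 : t * ‖T‖ * C * ‖A x‖ < Real.sqrt δ' * ‖A x‖ :=
      mul_lt_mul_of_pos_right h3 hAxpos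
    have h18 : t * ‖T‖ * C * ‖A x‖ * ‖u‖ < Real.sqrt δ' * ‖A x‖ * ‖u‖ :=
      mul_lt_mul_of_pos_right h17 hun
    have h19 : Real.sqrt δ' * ‖A x‖ * ‖u‖ ≤ ‖u‖ * ‖u‖ :=
      mul_le_mul_of_nonneg_right h2 (norm_nonneg u)
    nlinarith [h1, h18, h19]
  constructor
  · haveI : CompleteSpace ↥(LinearMap.range (A : X →ₗ[ℂ] X) ⊔ LinearMap.ker (A : X →ₗ[ℂ] X) : Submodule ℂ X) :=
      hMclosed.completeSpace_coe
    exact Submodule.orthogonal_eq_bot_iff.mp horth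
  · rw [Submodule.eq_bot_iff]
    intro x hx
    obtain ⟨hxr, hxk⟩ := Submodule.mem_inf.mp hx
    obtain ⟨y, hy⟩ := LinearMap.mem_range.mp hxr
    have hg := gap y x hxk
    rw [show A y = x from hy, inner_self_eq_norm_sq_to_K] at hg
    rw [norm_pow, RCLike.norm_ofReal, abs_norm] at hg
    have h11 : ‖x‖^2 ≤ 0 := by nlinarith [hg, hδ'pos, sq_nonneg ‖x‖]
    have h12 : ‖x‖^2 = 0 := le_antisymm h11 (sq_nonneg _)
    have h13 : ‖x‖ = 0 := pow_eq_zero_iff two_ne_zero |>.mp h12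
    exact norm_eq_zero.mp h13
end
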